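/- For real numbers l⁻, l⁺ with 0 < l⁻ ≤ l⁺, one has cosh⁻¹((cosh l⁻ + cosh² l⁺)/sinh² l⁺) ≥ exp(-2 l⁺). -/

import Mathlib

/-- The inverse hyperbolic cosine on `[1, ∞)`. -/
noncomputable def arcosh (x : ℝ) : ℝ := Real.log (x + Real.sqrt (x ^ 2 - 1))

lemma log_one_add_ge (u : ℝ) (hu : 0 ≤ u) : u / (1 + u) ≤ Real.log (1 + u) := by
  have h1 : (0:ℝ) < 1 + u := by linarith
  have h2 := Real.log_le_sub_one_of_pos (x := (1 + u)⁻¹) (by positivity)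
  rw [Real.log_inv] at h2
  have : 1 - (1 + u)⁻¹ = u / (1 + u) := by field_simp; ring
  linarith [this ▸ (by linarith : 1 - (1 + u)⁻¹ ≤ Real.log (1 + u))]

/-- Lower bound for the minimal distance between two boundary components of a
pair of pants with boundary half-lengths in `[l⁻, l⁺]`:
`cosh⁻¹((cosh l⁻ + cosh² l⁺)/sinh² l⁺) ≥ exp(-2 l⁺)`. -/
theorem delta_minus_lower_bound (lm lp : ℝ) (hlm : 0 < lm) (hle : lm ≤ lp) :
    Real.exp (-2 * lp) ≤
      arcosh ((Real.cosh lm + Real.cosh lp ^ 2) / Real.sinh lp ^ 2) := by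
  have hlp : 0 < lp := lt_of_lt_of_le hlm hle
  set s := Real.sinh lp with hs_def
  have hs : 0 < s := Real.sinh_pos_iff.2 hlp
  set x := (Real.cosh lm + Real.cosh lp ^ 2) / s ^ 2 with hx_def
  have hcm : 1 ≤ Real.cosh lm := Real.one_le_cosh lm
  have hch : Real.cosh lp ^ 2 - s ^ 2 = 1 := Real.cosh_sq_sub_sinh_sq lp
  have hx1 : 1 + 2 / s ^ 2 ≤ x := by
    rw [hx_def, le_div_iff₀ (by positivity)]
    have : (1 + 2 / s ^ 2) * s ^ 2 = s ^ 2 + 2 := by field_simp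
    rw [this]; nlinarith
  have hxge1 : (1:ℝ) ≤ x := by
    have : 0 ≤ 2 / s ^ 2 := by positivity
    linarith
  have hsq : 2 / s ≤ Real.sqrt (x ^ 2 - 1) := by
    rw [Real.le_sqrt (by positivity) (by nlinarith)]
    have h1 : 2 / s ^ 2 ≤ x - 1 := by linarith
    have h2 : (2:ℝ) ≤ x + 1 := by linarith
    have : (2 / s) ^ 2 = (2 / s ^ 2) * 2 := by field_simp
    calc (2 / s) ^ 2 = (2 / s ^ 2) * 2 := this
      _ ≤ (x - 1) * (x + 1) := by
          apply mul_le_mul h1 h2 (by norm_num) (by linarith)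
      _ = x ^ 2 - 1 := by ring
  have hlog : Real.log (1 + 2 / s) ≤ arcosh x := by
    apply Real.log_le_log (by positivity)
    linarith
  have hstep : 2 / (s + 2) ≤ Real.log (1 + 2 / s) := by
    have := log_one_add_ge (2 / s) (by positivity)
    have heq : (2 / s) / (1 + 2 / s) = 2 / (s + 2) := by
      field_simp
    rw [heq] at this; linarith
  have hfinal : Real.exp (-2 * lp) ≤ 2 / (s + 2) := by
    rw [le_div_iff₀ (by positivity)]
    have hE : 1 ≤ Real.exp lp := Real.one_le_exp hlp.le
    have hEpos : 0 < Real.exp lp := Real.exp_pos lp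
    have hA : Real.exp (-2 * lp) * Real.exp lp * Real.exp lp = 1 := by
      rw [← Real.exp_add, ← Real.exp_add, show -2 * lp + lp + lp = 0 by ring, Real.exp_zero]
    have hsinh : s = (Real.exp lp - Real.exp (-lp)) / 2 := Real.sinh_eq lp
    have hinv : Real.exp (-lp) * Real.exp lp = 1 := by
      rw [← Real.exp_add]; norm_num
    have hApos : 0 < Real.exp (-2 * lp) := Real.exp_pos _
    have hinvpos : 0 < Real.exp (-lp) := Real.exp_pos _
    nlinarith [mul_nonneg (mul_nonneg (sub_nonneg.2 hE) hEpos.le) hApos.le,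
      mul_nonneg (sub_nonneg.2 hE) hinvpos.le,
      mul_pos hEpos hApos, sq_nonneg (Real.exp lp - 1),
      mul_nonneg (mul_nonneg (sub_nonneg.2 hE) (sub_nonneg.2 hE)) hApos.le]
  linarith
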